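/- arXiv:2206.03023 — 4 statements merged into one kernel-verified Lean document; each statement's English description precedes it below -/
import Mathlib

section
/- Let X be a finite set, q a strictly positive probability distribution on X, f convex with f(1) = 0, and y : X → ℝ. Then sup over probability distributions p on X of [∑_x p(x) y(x) - D_f(p‖q)] ≤ ∑_x q(x) f⋆(y(x)), where D_f(p‖q) = ∑_x q(x) f(p(x)/q(x)) and f⋆(t) = sup_{s ≥ 0}(st - f(s)) is the conjugate over nonnegative reals. -/
open Finset

/-- Weak duality for f-divergence regularized linear objectives:
for any probability distribution p on a finite set X,
∑_x p(x)y(x) - D_f(p‖q) ≤ ∑_x q(x) f⋆(y(x)), where f⋆ is the conjugate of f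
over the nonnegative reals. -/
theorem stmt_7 {X : Type*} [Fintype X] (q : X → ℝ)
    (hq_pos : ∀ x, 0 < q x) (hq_sum : ∑ x, q x = 1)
    (f : ℝ → ℝ) (hf_convex : ConvexOn ℝ (Set.Ici 0) f) (hf_one : f 1 = 0)
    (y : X → ℝ) (fstar : ℝ → ℝ)
    (hfstar : ∀ t, IsLUB {v : ℝ | ∃ s : ℝ, 0 ≤ s ∧ v = s * t - f s} (fstar t)) :
    ∀ p : X → ℝ, (∀ x, 0 ≤ p x) → (∑ x, p x = 1) →
      (∑ x, p x * y x) - (∑ x, q x * f (p x / q x)) ≤ ∑ x, q x * fstar (y x) := by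
  intro p hp hps
  rw [← Finset.sum_sub_distrib]
  apply Finset.sum_le_sum
  intro x _
  have hqx := hq_pos x
  have hle : p x / q x * y x - f (p x / q x) ≤ fstar (y x) :=
    (hfstar (y x)).1 ⟨p x / q x, div_nonneg (hp x) hqx.le, rfl⟩
  have := mul_le_mul_of_nonneg_left hle hqx.le
  calc p x * y x - q x * f (p x / q x)
      = q x * (p x / q x * y x - f (p x / q x)) := by field_simp
    _ ≤ q x * fstar (y x) := this
end

section
/- (Performance difference lemma, finite MDP.) Consider a finite MDP with state space S, action space A, reward r : S × A → ℝ, transition kernel T, discount γ ∈ [0,1), and initial distribution μ₀. For any two stationary policies π, π', V^{π'}(μ₀) - V^{π}(μ₀) = (1/(1-γ)) ∑_{s} d^{π'}(s) ∑_a π'(a|s) A^{π}(s,a), where d^{π'} is the normalized discounted state occupancy of π' starting from μ₀, A^π(s,a) = Q^π(s,a) - V^π(s), and V^π(μ₀) = E_{s₀∼μ₀}[V^π(s₀)]. -/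
open Finset

/-- Performance difference lemma, finite MDP:
V^{π'}(μ₀) - V^{π}(μ₀) = (1/(1-γ)) ∑_s d^{π'}(s) ∑_a π'(a|s) A^{π}(s,a),
where V^π, V^{π'} are characterized by their Bellman fixed-point equations and
d^{π'} by the Bellman flow equation for the normalized discounted occupancy. -/
theorem stmt_9 {S A : Type*} [Fintype S] [Fintype A]
    (r : S → A → ℝ) (T : S → A → S → ℝ)
    (hT_nonneg : ∀ s a s', 0 ≤ T s a s') (hT_sum : ∀ s a, ∑ s', T s a s' = 1)
    (γ : ℝ) (hγ0 : 0 ≤ γ) (hγ1 : γ < 1)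
    (μ₀ : S → ℝ) (hμ₀_nonneg : ∀ s, 0 ≤ μ₀ s) (hμ₀_sum : ∑ s, μ₀ s = 1)
    (π π' : S → A → ℝ)
    (hπ_nonneg : ∀ s a, 0 ≤ π s a) (hπ_sum : ∀ s, ∑ a, π s a = 1)
    (hπ'_nonneg : ∀ s a, 0 ≤ π' s a) (hπ'_sum : ∀ s, ∑ a, π' s a = 1)
    (Vπ Vπ' : S → ℝ)
    (hVπ : ∀ s, Vπ s = ∑ a, π s a * (r s a + γ * ∑ s', T s a s' * Vπ s'))
    (hVπ' : ∀ s, Vπ' s = ∑ a, π' s a * (r s a + γ * ∑ s', T s a s' * Vπ' s'))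
    (d' : S → ℝ) (hd'_nonneg : ∀ s, 0 ≤ d' s)
    (hd'_flow : ∀ s, d' s
      = (1 - γ) * μ₀ s + γ * ∑ st, ∑ aa, d' st * π' st aa * T st aa s) :
    (∑ s, μ₀ s * Vπ' s) - (∑ s, μ₀ s * Vπ s)
      = (1 / (1 - γ)) * ∑ s, d' s *
          ∑ a, π' s a * ((r s a + γ * ∑ s', T s a s' * Vπ s') - Vπ s) := by
  have hγne : (1 : ℝ) - γ ≠ 0 := by linarith
  set Δ : S → ℝ := fun s => Vπ' s - Vπ s with hΔ
  -- rewrite the inner advantage sum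
  have hg : ∀ s, ∑ a, π' s a * ((r s a + γ * ∑ s', T s a s' * Vπ s') - Vπ s)
      = Δ s - γ * ∑ a, π' s a * ∑ s', T s a s' * Δ s' := by
    intro s
    have hexp : ∀ a, ∑ s', T s a s' * Vπ s'
        = (∑ s', T s a s' * Vπ' s') - ∑ s', T s a s' * Δ s' := by
      intro a
      rw [← Finset.sum_sub_distrib]
      exact Finset.sum_congr rfl fun s' _ => by simp [hΔ]; ring
    calc ∑ a, π' s a * ((r s a + γ * ∑ s', T s a s' * Vπ s') - Vπ s)
        = ∑ a, (π' s a * (r s a + γ * ∑ s', T s a s' * Vπ' s')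
            - γ * (π' s a * ∑ s', T s a s' * Δ s') - π' s a * Vπ s) := by
          exact Finset.sum_congr rfl fun a _ => by rw [hexp a]; ring
      _ = (∑ a, π' s a * (r s a + γ * ∑ s', T s a s' * Vπ' s'))
            - γ * (∑ a, π' s a * ∑ s', T s a s' * Δ s')
            - (∑ a, π' s a) * Vπ s := by
          rw [Finset.sum_sub_distrib, Finset.sum_sub_distrib,
            ← Finset.mul_sum, ← Finset.sum_mul]
      _ = Δ s - γ * ∑ a, π' s a * ∑ s', T s a s' * Δ s' := by
          rw [← hVπ' s, hπ'_sum s]; simp [hΔ]; ring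
  -- swap sums
  have inner : ∀ s, d' s * ∑ a, π' s a * ∑ s', T s a s' * Δ s'
      = ∑ s', ∑ a, d' s * π' s a * T s a s' * Δ s' := by
    intro s
    simp only [Finset.mul_sum]
    rw [Finset.sum_comm]
    exact Finset.sum_congr rfl fun _ _ => Finset.sum_congr rfl fun _ _ => by ring
  have hswap : ∑ s, d' s * ∑ a, π' s a * ∑ s', T s a s' * Δ s'
      = ∑ s', (∑ st, ∑ aa, d' st * π' st aa * T st aa s') * Δ s' := by
    rw [Finset.sum_congr rfl fun s _ => inner s, Finset.sum_comm]
    exact Finset.sum_congr rfl fun s' _ => by simp [Finset.sum_mul]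
  have key : ∑ s, d' s * ∑ a, π' s a * ((r s a + γ * ∑ s', T s a s' * Vπ s') - Vπ s)
      = (1 - γ) * ∑ s, μ₀ s * Δ s := by
    calc ∑ s, d' s * ∑ a, π' s a * ((r s a + γ * ∑ s', T s a s' * Vπ s') - Vπ s)
        = ∑ s, (d' s * Δ s - γ * (d' s * ∑ a, π' s a * ∑ s', T s a s' * Δ s')) := by
          exact Finset.sum_congr rfl fun s _ => by rw [hg s]; ring
      _ = (∑ s, d' s * Δ s) - γ * ∑ s, d' s * ∑ a, π' s a * ∑ s', T s a s' * Δ s' := by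
          rw [Finset.sum_sub_distrib, ← Finset.mul_sum]
      _ = (∑ s, d' s * Δ s)
            - γ * ∑ s, (∑ st, ∑ aa, d' st * π' st aa * T st aa s) * Δ s := by
          rw [hswap]
      _ = ∑ s, (d' s - γ * ∑ st, ∑ aa, d' st * π' st aa * T st aa s) * Δ s := by
          rw [Finset.mul_sum, ← Finset.sum_sub_distrib]
          exact Finset.sum_congr rfl fun s _ => by ring
      _ = (1 - γ) * ∑ s, μ₀ s * Δ s := by
          rw [Finset.mul_sum]
          refine Finset.sum_congr rfl fun s _ => ?_
          have := hd'_flow s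
          have h2 : d' s - γ * ∑ st, ∑ aa, d' st * π' st aa * T st aa s
              = (1 - γ) * μ₀ s := by linarith
          rw [h2]; ring
  rw [key, ← Finset.sum_sub_distrib]
  have : ∑ s, (μ₀ s * Vπ' s - μ₀ s * Vπ s) = ∑ s, μ₀ s * Δ s := by
    exact Finset.sum_congr rfl fun s _ => by simp [hΔ]; ring
  rw [this]
  field_simp
end

section
/- In a finite discounted MDP with rewards bounded by R_max, for any two stationary policies π, π': |V^{π'}(μ₀) - V^{π}(μ₀)| ≤ (R_max/(1-γ)²) · ∑_s d^{π'}(s) ‖π'(·|s) - π(·|s)‖₁, where ‖·‖₁ is the total variation (L1) distance over actions. -/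
open Finset

/-- In a finite discounted MDP with rewards bounded by R_max,
|V^{π'}(μ₀) - V^{π}(μ₀)| ≤ (R_max/(1-γ)²) · ∑_s d^{π'}(s) ‖π'(·|s) - π(·|s)‖₁. -/
theorem stmt_10 {S A : Type*} [Fintype S] [Fintype A]
    (r : S → A → ℝ) (Rmax : ℝ) (hR : ∀ s a, |r s a| ≤ Rmax)
    (T : S → A → S → ℝ)
    (hT_nonneg : ∀ s a s', 0 ≤ T s a s') (hT_sum : ∀ s a, ∑ s', T s a s' = 1)
    (γ : ℝ) (hγ0 : 0 ≤ γ) (hγ1 : γ < 1)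
    (μ₀ : S → ℝ) (hμ₀_nonneg : ∀ s, 0 ≤ μ₀ s) (hμ₀_sum : ∑ s, μ₀ s = 1)
    (π π' : S → A → ℝ)
    (hπ_nonneg : ∀ s a, 0 ≤ π s a) (hπ_sum : ∀ s, ∑ a, π s a = 1)
    (hπ'_nonneg : ∀ s a, 0 ≤ π' s a) (hπ'_sum : ∀ s, ∑ a, π' s a = 1)
    (Vπ Vπ' : S → ℝ)
    (hVπ : ∀ s, Vπ s = ∑ a, π s a * (r s a + γ * ∑ s', T s a s' * Vπ s'))
    (hVπ' : ∀ s, Vπ' s = ∑ a, π' s a * (r s a + γ * ∑ s', T s a s' * Vπ' s'))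
    (d' : S → ℝ) (hd'_nonneg : ∀ s, 0 ≤ d' s)
    (hd'_flow : ∀ s, d' s
      = (1 - γ) * μ₀ s + γ * ∑ st, ∑ aa, d' st * π' st aa * T st aa s) :
    |(∑ s, μ₀ s * Vπ' s) - (∑ s, μ₀ s * Vπ s)|
      ≤ (Rmax / (1 - γ)^2) * ∑ s, d' s * ∑ a, |π' s a - π s a| := by
  -- nontriviality
  rcases isEmpty_or_nonempty S with hS | hS
  · exfalso; rw [Finset.univ_eq_empty, Finset.sum_empty] at hμ₀_sum; norm_num at hμ₀_sum
  rcases isEmpty_or_nonempty A with hA | hA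
  · exfalso
    have := hπ_sum (Classical.arbitrary S)
    rw [Finset.univ_eq_empty, Finset.sum_empty] at this; norm_num at this
  have h1γ : (0:ℝ) < 1 - γ := by linarith
  have hRmax : 0 ≤ Rmax :=
    le_trans (abs_nonneg _) (hR (Classical.arbitrary S) (Classical.arbitrary A))
  -- abbreviations
  set Q : S → A → ℝ := fun s a => r s a + γ * ∑ s', T s a s' * Vπ s' with hQdef
  set g : S → ℝ := fun s => ∑ a, (π' s a - π s a) * Q s a with hgdef
  -- bound on Vπ
  obtain ⟨sM, _, hsM⟩ := Finset.exists_max_image (Finset.univ : Finset S)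
    (fun s => |Vπ s|) ⟨Classical.arbitrary S, Finset.mem_univ _⟩
  have hVbound : ∀ s, |Vπ s| ≤ Rmax / (1 - γ) := by
    have hM : |Vπ sM| ≤ Rmax + γ * |Vπ sM| := by
      calc |Vπ sM| = |∑ a, π sM a * (r sM a + γ * ∑ s', T sM a s' * Vπ s')| := by
            rw [← hVπ]
        _ ≤ ∑ a, |π sM a * (r sM a + γ * ∑ s', T sM a s' * Vπ s')| :=
            Finset.abs_sum_le_sum_abs _ _
        _ ≤ ∑ a, π sM a * (Rmax + γ * |Vπ sM|) := by
            apply Finset.sum_le_sum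
            intro a _
            rw [abs_mul, abs_of_nonneg (hπ_nonneg sM a)]
            apply mul_le_mul_of_nonneg_left _ (hπ_nonneg sM a)
            calc |r sM a + γ * ∑ s', T sM a s' * Vπ s'|
                ≤ |r sM a| + |γ * ∑ s', T sM a s' * Vπ s'| := abs_add_le _ _
              _ ≤ Rmax + γ * |Vπ sM| := by
                  apply add_le_add (hR sM a)
                  rw [abs_mul, abs_of_nonneg hγ0]
                  apply mul_le_mul_of_nonneg_left _ hγ0
                  calc |∑ s', T sM a s' * Vπ s'| ≤ ∑ s', |T sM a s' * Vπ s'| :=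
                        Finset.abs_sum_le_sum_abs _ _
                    _ ≤ ∑ s', T sM a s' * |Vπ sM| := by
                        apply Finset.sum_le_sum
                        intro s' _
                        rw [abs_mul, abs_of_nonneg (hT_nonneg sM a s')]
                        exact mul_le_mul_of_nonneg_left (hsM s' (Finset.mem_univ _))
                          (hT_nonneg sM a s')
                    _ = |Vπ sM| := by rw [← Finset.sum_mul, hT_sum, one_mul]
        _ = Rmax + γ * |Vπ sM| := by rw [← Finset.sum_mul, hπ_sum, one_mul]
    have hMle : |Vπ sM| ≤ Rmax / (1 - γ) := by
      rw [le_div_iff₀ h1γ]; nlinarith [hM]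
    intro s
    exact le_trans (hsM s (Finset.mem_univ _)) hMle
  -- bound on Q
  have hQbound : ∀ s a, |Q s a| ≤ Rmax / (1 - γ) := by
    intro s a
    have : |Q s a| ≤ Rmax + γ * (Rmax / (1 - γ)) := by
      calc |Q s a| ≤ |r s a| + |γ * ∑ s', T s a s' * Vπ s'| := abs_add_le _ _
        _ ≤ Rmax + γ * (Rmax / (1 - γ)) := by
            apply add_le_add (hR s a)
            rw [abs_mul, abs_of_nonneg hγ0]
            apply mul_le_mul_of_nonneg_left _ hγ0
            calc |∑ s', T s a s' * Vπ s'| ≤ ∑ s', |T s a s' * Vπ s'| :=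
                  Finset.abs_sum_le_sum_abs _ _
              _ ≤ ∑ s', T s a s' * (Rmax / (1 - γ)) := by
                  apply Finset.sum_le_sum
                  intro s' _
                  rw [abs_mul, abs_of_nonneg (hT_nonneg s a s')]
                  exact mul_le_mul_of_nonneg_left (hVbound s') (hT_nonneg s a s')
              _ = Rmax / (1 - γ) := by rw [← Finset.sum_mul, hT_sum, one_mul]
    have heq : Rmax + γ * (Rmax / (1 - γ)) = Rmax / (1 - γ) := by
      field_simp
      ring
    linarith [this]
  -- bound on g
  have hgbound : ∀ s, |g s| ≤ (Rmax / (1 - γ)) * ∑ a, |π' s a - π s a| := by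
    intro s
    calc |g s| ≤ ∑ a, |(π' s a - π s a) * Q s a| := Finset.abs_sum_le_sum_abs _ _
      _ ≤ ∑ a, |π' s a - π s a| * (Rmax / (1 - γ)) := by
          apply Finset.sum_le_sum
          intro a _
          rw [abs_mul]
          exact mul_le_mul_of_nonneg_left (hQbound s a) (abs_nonneg _)
      _ = (Rmax / (1 - γ)) * ∑ a, |π' s a - π s a| := by
          rw [← Finset.sum_mul, mul_comm]
  -- Bellman difference expansion
  have hΔ : ∀ s, Vπ' s - Vπ s
      = g s + γ * ∑ a, π' s a * ∑ s', T s a s' * (Vπ' s' - Vπ s') := by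
    intro s
    have e1 : Vπ' s = (∑ a, π' s a * r s a)
        + γ * ∑ a, π' s a * ∑ s', T s a s' * Vπ' s' := by
      rw [hVπ' s, Finset.mul_sum, ← Finset.sum_add_distrib]
      exact Finset.sum_congr rfl fun a _ => by ring
    have e2 : Vπ s = ∑ a, π s a * Q s a := hVπ s
    have e3 : g s = (∑ a, π' s a * Q s a) - ∑ a, π s a * Q s a := by
      rw [hgdef, ← Finset.sum_sub_distrib]
      exact Finset.sum_congr rfl fun a _ => by ring
    have e4 : ∑ a, π' s a * Q s a = (∑ a, π' s a * r s a)
        + γ * ∑ a, π' s a * ∑ s', T s a s' * Vπ s' := by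
      rw [Finset.mul_sum, ← Finset.sum_add_distrib]
      exact Finset.sum_congr rfl fun a _ => by simp only [hQdef]; ring
    have e5 : ∑ a, π' s a * ∑ s', T s a s' * (Vπ' s' - Vπ s')
        = (∑ a, π' s a * ∑ s', T s a s' * Vπ' s')
          - ∑ a, π' s a * ∑ s', T s a s' * Vπ s' := by
      rw [← Finset.sum_sub_distrib]
      apply Finset.sum_congr rfl
      intro a _
      rw [← mul_sub, ← Finset.sum_sub_distrib]
      congr 1
      exact Finset.sum_congr rfl fun s' _ => by ring
    rw [e1, e2, e3, e4, e5]
    ring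
  -- key identity via flow equation
  have key : (1 - γ) * ∑ s, μ₀ s * (Vπ' s - Vπ s) = ∑ s, d' s * g s := by
    have E1 : ∑ s, d' s * (Vπ' s - Vπ s)
        = (∑ s, d' s * g s)
          + γ * ∑ s, ∑ a, ∑ s', d' s * π' s a * T s a s' * (Vπ' s' - Vπ s') := by
      calc ∑ s, d' s * (Vπ' s - Vπ s)
          = ∑ s, (d' s * g s
              + γ * ∑ a, ∑ s', d' s * π' s a * T s a s' * (Vπ' s' - Vπ s')) := by
            apply Finset.sum_congr rfl
            intro s _
            rw [hΔ s]
            have e : ∑ a, ∑ s', d' s * π' s a * T s a s' * (Vπ' s' - Vπ s')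
                = d' s * ∑ a, π' s a * ∑ s', T s a s' * (Vπ' s' - Vπ s') := by
              simp only [Finset.mul_sum]
              exact Finset.sum_congr rfl fun a _ =>
                Finset.sum_congr rfl fun s' _ => by ring
            rw [e]; ring
        _ = _ := by rw [Finset.sum_add_distrib, ← Finset.mul_sum]
    have E2 : ∑ s, d' s * (Vπ' s - Vπ s)
        = (1 - γ) * (∑ s, μ₀ s * (Vπ' s - Vπ s))
          + γ * ∑ s', ∑ st, ∑ aa, d' st * π' st aa * T st aa s' * (Vπ' s' - Vπ s') := by
      calc ∑ s, d' s * (Vπ' s - Vπ s)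
          = ∑ s, ((1 - γ) * (μ₀ s * (Vπ' s - Vπ s))
              + γ * ∑ st, ∑ aa, d' st * π' st aa * T st aa s * (Vπ' s - Vπ s)) := by
            apply Finset.sum_congr rfl
            intro s _
            have e : ∑ st, ∑ aa, d' st * π' st aa * T st aa s * (Vπ' s - Vπ s)
                = (∑ st, ∑ aa, d' st * π' st aa * T st aa s) * (Vπ' s - Vπ s) := by
              rw [Finset.sum_mul]
              exact Finset.sum_congr rfl fun st _ => (Finset.sum_mul _ _ _).symm
            rw [hd'_flow s, e]; ring
        _ = _ := by
            rw [Finset.sum_add_distrib, ← Finset.mul_sum, ← Finset.mul_sum]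
    have hcomm : ∑ s, ∑ a, ∑ s', d' s * π' s a * T s a s' * (Vπ' s' - Vπ s')
        = ∑ s', ∑ st, ∑ aa, d' st * π' st aa * T st aa s' * (Vπ' s' - Vπ s') := by
      rw [show (∑ s, ∑ a, ∑ s', d' s * π' s a * T s a s' * (Vπ' s' - Vπ s'))
          = ∑ s, ∑ s', ∑ a, d' s * π' s a * T s a s' * (Vπ' s' - Vπ s') from
        Finset.sum_congr rfl fun s _ => Finset.sum_comm]
      exact Finset.sum_comm
    rw [E1, hcomm] at E2
    linarith [E2]
  -- finish
  have hsum : (∑ s, μ₀ s * Vπ' s) - (∑ s, μ₀ s * Vπ s)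
      = ∑ s, μ₀ s * (Vπ' s - Vπ s) := by
    rw [← Finset.sum_sub_distrib]
    exact Finset.sum_congr rfl fun s _ => by ring
  rw [hsum]
  have hgsum : |∑ s, d' s * g s|
      ≤ (Rmax / (1 - γ)) * ∑ s, d' s * ∑ a, |π' s a - π s a| := by
    calc |∑ s, d' s * g s| ≤ ∑ s, |d' s * g s| := Finset.abs_sum_le_sum_abs _ _
      _ ≤ ∑ s, d' s * ((Rmax / (1 - γ)) * ∑ a, |π' s a - π s a|) := by
          apply Finset.sum_le_sum
          intro s _
          rw [abs_mul, abs_of_nonneg (hd'_nonneg s)]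
          exact mul_le_mul_of_nonneg_left (hgbound s) (hd'_nonneg s)
      _ = (Rmax / (1 - γ)) * ∑ s, d' s * ∑ a, |π' s a - π s a| := by
          rw [Finset.mul_sum]
          exact Finset.sum_congr rfl fun s _ => by ring
  have habs : (1 - γ) * |∑ s, μ₀ s * (Vπ' s - Vπ s)| = |∑ s, d' s * g s| := by
    rw [← key, abs_mul, abs_of_pos h1γ]
  have hfin : (1 - γ) * |∑ s, μ₀ s * (Vπ' s - Vπ s)|
      ≤ (Rmax / (1 - γ)) * ∑ s, d' s * ∑ a, |π' s a - π s a| := by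
    rw [habs]; exact hgsum
  rw [show Rmax / (1 - γ)^2 = (Rmax / (1 - γ)) / (1 - γ) by rw [div_div, ← sq]]
  rw [div_mul_eq_mul_div, le_div_iff₀ h1γ]
  linarith [hfin]
end

section
/- For a finite MDP, the Lagrangian dual of the f-divergence-regularized occupancy optimization max_{d ≥ 0, Bellman-flow-feasible} [∑_{s,a} d(s,a) R(s) - D_f(d ‖ d^O)] is min_V (1-γ) ∑_s μ₀(s) V(s) + ∑_{s,a} d^O(s,a) f⋆(R(s) + γ (TV)(s,a) - V(s)), where (TV)(s,a) = ∑_{s'} T(s'|s,a) V(s'), f⋆ is the Fenchel conjugate of f over [0,∞), and D_f(d‖d^O) = ∑_{s,a} d^O(s,a) f(d(s,a)/d^O(s,a)). Weak duality holds: the primal optimum is at most the dual value for every V. -/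
open Finset

/-- weak Lagrangian duality for the f-divergence regularized
occupancy optimization: for every Bellman-flow-feasible nonnegative d and
every dual variable V,
∑ d·R - D_f(d‖d^O) ≤ (1-γ)∑_s μ₀(s)V(s) + ∑_{s,a} d^O(s,a) f⋆(R(s) + γ(TV)(s,a) - V(s)). -/
theorem stmt_16 {S A : Type*} [Fintype S] [Fintype A]
    (T : S → A → S → ℝ)
    (hT_nonneg : ∀ s a s', 0 ≤ T s a s') (hT_sum : ∀ s a, ∑ s', T s a s' = 1)
    (μ₀ : S → ℝ) (hμ₀_nonneg : ∀ s, 0 ≤ μ₀ s) (hμ₀_sum : ∑ s, μ₀ s = 1)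
    (γ : ℝ) (hγ0 : 0 < γ) (hγ1 : γ < 1)
    (dO : S → A → ℝ) (hdO_pos : ∀ s a, 0 < dO s a) (hdO_sum : ∑ s, ∑ a, dO s a = 1)
    (R : S → ℝ)
    (f : ℝ → ℝ) (hf_convex : ConvexOn ℝ (Set.Ici 0) f)
    (fstar : ℝ → ℝ)
    (hfstar : ∀ t, IsLUB {v : ℝ | ∃ x : ℝ, 0 ≤ x ∧ v = x * t - f x} (fstar t)) :
    ∀ d : S → A → ℝ, (∀ s a, 0 ≤ d s a) →
      (∀ s, ∑ a, d s a
        = (1 - γ) * μ₀ s + γ * ∑ st, ∑ aa, T st aa s * d st aa) →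
      ∀ V : S → ℝ,
        (∑ s, ∑ a, d s a * R s) - (∑ s, ∑ a, dO s a * f (d s a / dO s a))
          ≤ (1 - γ) * (∑ s, μ₀ s * V s)
            + ∑ s, ∑ a, dO s a * fstar (R s + γ * (∑ s', T s a s' * V s') - V s) := by
  intro d hd_nonneg hflow V
  set y : S → A → ℝ := fun s a => R s + γ * (∑ s', T s a s' * V s') - V s with hy
  -- Pointwise Fenchel inequality
  have hpt : ∀ s a, d s a * y s a - dO s a * f (d s a / dO s a) ≤ dO s a * fstar (y s a) := by
    intro s a
    have hpos := hdO_pos s a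
    have hmem : (d s a / dO s a) * y s a - f (d s a / dO s a)
        ∈ {v : ℝ | ∃ x : ℝ, 0 ≤ x ∧ v = x * (y s a) - f x} :=
      ⟨d s a / dO s a, div_nonneg (hd_nonneg s a) hpos.le, rfl⟩
    have hle : (d s a / dO s a) * y s a - f (d s a / dO s a) ≤ fstar (y s a) :=
      (hfstar (y s a)).1 hmem
    have := mul_le_mul_of_nonneg_left hle hpos.le
    calc d s a * y s a - dO s a * f (d s a / dO s a)
        = dO s a * ((d s a / dO s a) * y s a - f (d s a / dO s a)) := by
          field_simp
      _ ≤ dO s a * fstar (y s a) := this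
  -- Key algebraic identity using the Bellman flow constraint
  have key : ∑ s, ∑ a, d s a * y s a
      = (∑ s, ∑ a, d s a * R s) - (1 - γ) * ∑ s, μ₀ s * V s := by
    have h1 : ∑ s, ∑ a, d s a * y s a
        = (∑ s, ∑ a, d s a * R s)
          + γ * (∑ s, ∑ a, d s a * ∑ s', T s a s' * V s')
          - ∑ s, (∑ a, d s a) * V s := by
      simp only [hy, mul_sub, mul_add]
      rw [Finset.mul_sum]
      simp only [Finset.sum_sub_distrib, Finset.sum_add_distrib, Finset.mul_sum,
        Finset.sum_mul]
      ring_nf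
      have e : ∀ x x_1 x_2, d x x_1 * γ * T x x_1 x_2 * V x_2
          = γ * d x x_1 * T x x_1 x_2 * V x_2 := fun _ _ _ => by ring
      simp only [e]; ring
    have h2 : ∑ s, (∑ a, d s a) * V s
        = (1 - γ) * (∑ s, μ₀ s * V s)
          + γ * (∑ s, ∑ a, d s a * ∑ s', T s a s' * V s') := by
      calc ∑ s, (∑ a, d s a) * V s
          = ∑ s, ((1 - γ) * μ₀ s + γ * ∑ st, ∑ aa, T st aa s * d st aa) * V s := by
            refine Finset.sum_congr rfl fun s _ => ?_
            rw [hflow s]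
        _ = (1 - γ) * (∑ s, μ₀ s * V s)
            + γ * ∑ s, ∑ st, ∑ aa, T st aa s * d st aa * V s := by
            simp only [add_mul, Finset.sum_add_distrib, Finset.mul_sum, Finset.sum_mul]
            ring_nf
        _ = (1 - γ) * (∑ s, μ₀ s * V s)
            + γ * (∑ s, ∑ a, d s a * ∑ s', T s a s' * V s') := by
            congr 1
            rw [Finset.sum_comm]
            congr 1
            refine Finset.sum_congr rfl fun st _ => ?_
            rw [Finset.sum_comm]
            refine Finset.sum_congr rfl fun aa _ => ?_
            rw [Finset.mul_sum]
            refine Finset.sum_congr rfl fun s _ => ?_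
            ring
    rw [h1, h2]; ring
  have hsum : ∑ s, ∑ a, (d s a * y s a - dO s a * f (d s a / dO s a))
      ≤ ∑ s, ∑ a, dO s a * fstar (y s a) :=
    Finset.sum_le_sum fun s _ => Finset.sum_le_sum fun a _ => hpt s a
  simp only [Finset.sum_sub_distrib] at hsum
  rw [key] at hsum
  linarith
end
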